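/- Let c₁, c₄, c₅ ∈ ℝ, c₃ ∈ ℝ with c₃ ≠ 0, and ω ∈ ℝ with ω ≠ 0. Define Ω(τ) = (1 + e^{3τ + 2c₁})^{−1/2}, H(τ) = c₃·e^{−3τ/2}·√(1 + e^{3τ + 2c₁}), y(τ) = c₄ − (2·e^{−2c₁}·(ω² − 1)/(3·c₃²))·ln(1 + e^{3τ + 2c₁}), and Φ(τ) = c₅ − (c₃·e^{−3τ/2}·(ω² − 1)³·√(1 + e^{3τ + 2c₁}))/(4·ω³). Then for every τ ∈ ℝ: H'(τ) = −(3/2)·H(τ)·Ω(τ)², y'(τ) = (2 − 2ω²)/H(τ)², and Φ'(τ) = 3·H(τ)·(ω² − 1)³·Ω(τ)²/(8·ω³). -/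

import Mathlib

/-- The explicit functions `Ω`, `H`, `y`, `Φ` solve the leading-order averaged
equations `H' = -(3/2) H Ω²`, `y' = (2 - 2ω²)/H²`, `Φ' = 3 H (ω²-1)³ Ω²/(8ω³)`
on all of `ℝ`. -/
theorem averaged_H_y_Phi_solutions (c₁ c₃ c₄ c₅ ω : ℝ) (hc₃ : c₃ ≠ 0) (hω : ω ≠ 0) :
    let Ω : ℝ → ℝ := fun τ => 1 / Real.sqrt (1 + Real.exp (3 * τ + 2 * c₁))
    let H : ℝ → ℝ := fun τ =>
      c₃ * Real.exp (-3 * τ / 2) * Real.sqrt (1 + Real.exp (3 * τ + 2 * c₁))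
    let y : ℝ → ℝ := fun τ =>
      c₄ - 2 * Real.exp (-2 * c₁) * (ω ^ 2 - 1) / (3 * c₃ ^ 2) *
        Real.log (1 + Real.exp (3 * τ + 2 * c₁))
    let Φ : ℝ → ℝ := fun τ =>
      c₅ - c₃ * Real.exp (-3 * τ / 2) * (ω ^ 2 - 1) ^ 3 *
        Real.sqrt (1 + Real.exp (3 * τ + 2 * c₁)) / (4 * ω ^ 3)
    ∀ τ : ℝ,
      HasDerivAt H (-(3 / 2) * H τ * (Ω τ) ^ 2) τ ∧
      HasDerivAt y ((2 - 2 * ω ^ 2) / (H τ) ^ 2) τ ∧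
      HasDerivAt Φ (3 * H τ * (ω ^ 2 - 1) ^ 3 * (Ω τ) ^ 2 / (8 * ω ^ 3)) τ := by
  intro Ω H y Φ τ
  have hE : (0:ℝ) < Real.exp (3 * τ + 2 * c₁) := Real.exp_pos _
  have hu : (0:ℝ) < 1 + Real.exp (3 * τ + 2 * c₁) := by linarith
  have hs : (0:ℝ) < Real.sqrt (1 + Real.exp (3 * τ + 2 * c₁)) := Real.sqrt_pos.mpr hu
  have hsq : (Real.sqrt (1 + Real.exp (3 * τ + 2 * c₁))) ^ 2
      = 1 + Real.exp (3 * τ + 2 * c₁) := Real.sq_sqrt hu.le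
  have hA : (0:ℝ) < Real.exp (-3 * τ / 2) := Real.exp_pos _
  have hkey : Real.exp (-2 * c₁) * Real.exp (-3 * τ / 2) ^ 2 *
      Real.exp (3 * τ + 2 * c₁) = 1 := by
    rw [sq, ← Real.exp_add, ← Real.exp_add, ← Real.exp_add]
    rw [show -2 * c₁ + (-3 * τ / 2 + -3 * τ / 2) + (3 * τ + 2 * c₁) = 0 by ring]
    exact Real.exp_zero
  -- derivative of inner function
  have hlin : HasDerivAt (fun τ : ℝ => 3 * τ + 2 * c₁) 3 τ := by
    simpa using ((hasDerivAt_id τ).const_mul 3).add_const (2 * c₁)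
  have hexp : HasDerivAt (fun τ : ℝ => Real.exp (3 * τ + 2 * c₁))
      (Real.exp (3 * τ + 2 * c₁) * 3) τ := hlin.exp
  have hinner : HasDerivAt (fun τ : ℝ => 1 + Real.exp (3 * τ + 2 * c₁))
      (Real.exp (3 * τ + 2 * c₁) * 3) τ := hexp.const_add 1
  have hsqrt : HasDerivAt (fun τ : ℝ => Real.sqrt (1 + Real.exp (3 * τ + 2 * c₁)))
      (Real.exp (3 * τ + 2 * c₁) * 3 /
        (2 * Real.sqrt (1 + Real.exp (3 * τ + 2 * c₁)))) τ :=
    hinner.sqrt hu.ne'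
  have hlin2 : HasDerivAt (fun τ : ℝ => -3 * τ / 2) (-3 / 2) τ := by
    simpa using (((hasDerivAt_id τ).const_mul (-3)).div_const 2)
  have hexp2 : HasDerivAt (fun τ : ℝ => Real.exp (-3 * τ / 2))
      (Real.exp (-3 * τ / 2) * (-3 / 2)) τ := hlin2.exp
  set A := Real.exp (-3 * τ / 2) with hAdef
  set B := Real.exp (3 * τ + 2 * c₁) with hBdef
  set C := Real.exp (-2 * c₁) with hCdef
  set s := Real.sqrt (1 + B) with hsdef
  -- H
  have hH : HasDerivAt H
      ((c₃ * (A * (-3 / 2))) * s + (c₃ * A) * (B * 3 / (2 * s))) τ :=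
    (hexp2.const_mul c₃).mul hsqrt
  have hHval : (c₃ * (A * (-3 / 2))) * s + (c₃ * A) * (B * 3 / (2 * s))
      = -(3 / 2) * H τ * (Ω τ) ^ 2 := by
    show _ = -(3/2) * (c₃ * A * s) * (1 / s) ^ 2
    rw [show B = s ^ 2 - 1 by linarith]
    field_simp
    ring
  refine ⟨hHval ▸ hH, ?_, ?_⟩
  · -- y
    have hlog : HasDerivAt (fun τ : ℝ => Real.log (1 + Real.exp (3 * τ + 2 * c₁)))
        (Real.exp (3 * τ + 2 * c₁) * 3 / (1 + Real.exp (3 * τ + 2 * c₁))) τ :=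
      hinner.log hu.ne'
    have hy : HasDerivAt y
        (-(2 * C * (ω ^ 2 - 1) / (3 * c₃ ^ 2) * (B * 3 / (1 + B)))) τ :=
      ((hlog.const_mul _).const_sub c₄)
    have hval : -(2 * C * (ω ^ 2 - 1) / (3 * c₃ ^ 2) * (B * 3 / (1 + B)))
        = (2 - 2 * ω ^ 2) / (H τ) ^ 2 := by
      show _ = (2 - 2 * ω ^ 2) / (c₃ * A * s) ^ 2
      have hkey' : C * A ^ 2 * (s ^ 2 - 1) = 1 := by
        rw [show s ^ 2 - 1 = B by linarith]; exact hkey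
      rw [show (1 : ℝ) + B = s ^ 2 by linarith, show B = s ^ 2 - 1 by linarith]
      field_simp
      linear_combination (1 - ω ^ 2) * hkey'
    exact hval ▸ hy
  · -- Φ
    have hΦ : HasDerivAt Φ
        (-(((c₃ * (A * (-3 / 2))) * (ω ^ 2 - 1) ^ 3 * s +
          (c₃ * A) * (ω ^ 2 - 1) ^ 3 * (B * 3 / (2 * s))) / (4 * ω ^ 3))) τ := by
      have h := ((((hexp2.const_mul c₃).mul_const ((ω ^ 2 - 1) ^ 3)).mul hsqrt).div_const
        (4 * ω ^ 3)).const_sub c₅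
      exact h
    have hval : -(((c₃ * (A * (-3 / 2))) * (ω ^ 2 - 1) ^ 3 * s +
          (c₃ * A) * (ω ^ 2 - 1) ^ 3 * (B * 3 / (2 * s))) / (4 * ω ^ 3))
        = 3 * H τ * (ω ^ 2 - 1) ^ 3 * (Ω τ) ^ 2 / (8 * ω ^ 3) := by
      show _ = 3 * (c₃ * A * s) * (ω ^ 2 - 1) ^ 3 * (1 / s) ^ 2 / (8 * ω ^ 3)
      rw [show B = s ^ 2 - 1 by linarith]
      field_simp
      ring
    exact hval ▸ hΦ
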